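/- Let k ≥ 3 be an odd integer and ℓ ≥ 3 an odd integer. There is no rational number α with α^2 = C(k+1,2)(ℓ^2-1)B_{k-1}/(ℓ^{k+1}-1), where B_{k-1} is the (k-1)-st Bernoulli number. -/

import Mathlib

open Finset

lemma bernoulli_odd_zero {n : ℕ} (h : Odd n) (h1 : 1 < n) : bernoulli n = 0 := by
  rw [bernoulli_eq_bernoulli'_of_ne_one (by omega)]
  exact bernoulli'_eq_zero_of_odd h h1

lemma val_le_sub_one {n : ℕ} (hn : 1 ≤ n) : padicValNat 2 n ≤ n - 1 := by
  by_contra h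
  have h1 : 2 ^ padicValNat 2 n ∣ n := pow_padicValNat_dvd
  have h2 : 2 ^ padicValNat 2 n ≤ n := Nat.le_of_dvd (by omega) h1
  have h3 : n ≤ padicValNat 2 n := by omega
  have := Nat.lt_two_pow_self (n := n)
  have := Nat.pow_le_pow_right (show 1 ≤ 2 by norm_num) h3
  omega

lemma val_le_sub_two {n : ℕ} (hn : 3 ≤ n) : padicValNat 2 n ≤ n - 2 := by
  by_contra h
  have h1 : 2 ^ padicValNat 2 n ∣ n := pow_padicValNat_dvd
  have h2 : 2 ^ padicValNat 2 n ≤ n := Nat.le_of_dvd (by omega) h1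
  have h3 : n - 1 ≤ padicValNat 2 n := by omega
  have h4 : 2 ^ (n-1) ≤ n := le_trans (Nat.pow_le_pow_right (by norm_num) h3) h2
  -- contradiction: n < 2^(n-1) for n ≥ 3
  have : ∀ m, 3 ≤ m → m < 2 ^ (m - 1) := by
    intro m hm
    induction m with
    | zero => omega
    | succ i ih =>
      rcases Nat.lt_or_ge i 3 with hi | hi
      · have : i = 2 := by omega
        subst this; norm_num
      · have := ih (by omega)
        have : 2 ^ (i - 1) * 2 = 2 ^ i := by
          rw [← pow_succ]; congr 1; omega
        have h5 : i + 1 - 1 = i := by omega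
        rw [h5]; omega
  have := this n hn
  omega


lemma term_eq (m i : ℕ) (h : i ≤ m) :
    bernoulli i * ((m+1).choose i : ℚ) * 2^(m+1-i) / ((m:ℚ)+1) =
      (2 * bernoulli i) * (m.choose i : ℚ) * ((2:ℚ)^(m-i) / ((m+1-i : ℕ) : ℚ)) := by
  have e1 : m+1-i = (m-i)+1 := by omega
  have keyn := Nat.choose_mul_succ_eq m i
  rw [e1] at keyn
  have key3 : (m.choose i : ℚ) * ((m:ℚ)+1) = ((m+1).choose i : ℚ) * ((((m-i)+1 : ℕ)):ℚ) := by
    exact_mod_cast congrArg (Nat.cast (R := ℚ)) keyn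
  have h1 : ((m:ℚ)+1) ≠ 0 := by positivity
  have h2 : ((((m-i)+1 : ℕ)):ℚ) ≠ 0 := by exact_mod_cast Nat.succ_ne_zero (m-i)
  rw [e1, pow_succ]
  rw [mul_div_assoc', div_eq_div_iff h1 h2]
  linear_combination (-2) * bernoulli i * (2:ℚ)^(m-i) * key3

lemma nat_norm (b : ℕ) (hb : 0 < b) :
    padicNorm 2 (b:ℚ) = (2:ℚ)^(-(padicValNat 2 b : ℤ)) := by
  rw [padicNorm.eq_zpow_of_nonzero (by positivity), padicValRat.of_nat]
  norm_num

lemma nd_norm (a b : ℕ) (hb : 0 < b) :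
    padicNorm 2 ((2:ℚ)^a / (b:ℚ)) = (2:ℚ)^((padicValNat 2 b : ℤ) - a) := by
  have h2 : padicNorm 2 ((2:ℚ)^a) = (2:ℚ)^(-(a:ℤ)) := by
    have : ((2:ℚ))^a = (((2^a : ℕ)):ℚ) := by push_cast; ring
    rw [this, nat_norm _ (by positivity), padicValNat.prime_pow]
  rw [padicNorm.div, h2, nat_norm b hb, ← zpow_sub₀ (by norm_num : (2:ℚ) ≠ 0)]
  ring_nf


lemma faul (m : ℕ) (hm : 1 ≤ m) :
    2 * bernoulli m =
      1 - ∑ i ∈ range m, bernoulli i * ((m+1).choose i : ℚ) * 2^(m+1-i) / ((m:ℚ)+1) := by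
  have h := sum_range_pow 2 m
  push_cast at h
  have hL : ∑ k ∈ range 2, ((k:ℚ))^m = 1 := by
    rw [Finset.sum_range_succ, Finset.sum_range_one]
    simp [zero_pow (by omega : m ≠ 0)]
  rw [hL, Finset.sum_range_succ] at h
  have hlast : bernoulli m * ((m+1).choose m : ℚ) * (2:ℚ)^(m+1-m) / ((m:ℚ)+1)
      = 2 * bernoulli m := by
    rw [Nat.choose_succ_self_right, show m+1-m = 1 by omega]
    have h1 : ((m:ℚ)+1) ≠ 0 := by positivity
    push_cast
    field_simp
  rw [hlast] at h
  linarith [h]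

lemma two_bern_norm_le : ∀ m : ℕ, padicNorm 2 (2 * bernoulli m) ≤ 1 := by
  intro m
  induction m using Nat.strong_induction_on with
  | _ m ih =>
    rcases Nat.eq_zero_or_pos m with rfl | hm
    · rw [bernoulli_zero, mul_one, show (2:ℚ) = ((2:ℕ):ℚ) by norm_num,
        padicNorm.eq_zpow_of_nonzero (by norm_num), padicValRat.of_nat]
      apply zpow_le_one_of_nonpos₀ (by norm_num)
      simp
    · rw [faul m hm]
      refine le_trans padicNorm.sub ?_
      rw [padicNorm.one]
      apply max_le le_rfl
      apply padicNorm.sum_le ⟨0, by simp [hm]⟩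
      intro i hi
      have him : i < m := mem_range.1 hi
      rw [term_eq m i him.le, padicNorm.mul, padicNorm.mul,
        nd_norm (m-i) (m+1-i) (by omega)]
      have h1 := ih i him
      have h2 : padicNorm 2 ((m.choose i : ℚ)) ≤ 1 := padicNorm.of_nat _
      have h3 : (2:ℚ)^((padicValNat 2 (m+1-i) : ℤ) - (m-i : ℕ)) ≤ 1 := by
        apply zpow_le_one_of_nonpos₀ one_le_two
        have := val_le_sub_one (show 1 ≤ m+1-i by omega)
        have : padicValNat 2 (m+1-i) ≤ m - i := by omega
        omega
      calc padicNorm 2 (2*bernoulli i) * padicNorm 2 ((m.choose i : ℚ)) *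
            (2:ℚ)^((padicValNat 2 (m+1-i) : ℤ) - (m-i : ℕ))
          ≤ 1 * 1 * 1 := by
            apply mul_le_mul _ h3 (by positivity) (by norm_num)
            apply mul_le_mul h1 h2 (padicNorm.nonneg _) (by norm_num)
        _ = 1 := by norm_num

lemma bernoulli_odd_zero' {n : ℕ} (h : Odd n) (h1 : 1 < n) : bernoulli n = 0 := by
  rw [bernoulli_eq_bernoulli'_of_ne_one (by omega)]
  exact bernoulli'_eq_zero_of_odd h h1

lemma two_bern_norm_lt (m : ℕ) (hm : 2 ≤ m) (he : Even m) :
    padicNorm 2 (2 * bernoulli m - 1) ≤ 1/2 := by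
  have h := faul m (by omega)
  have hneg : 2*bernoulli m - 1
      = -∑ i ∈ range m, bernoulli i * ((m+1).choose i : ℚ) * 2^(m+1-i) / ((m:ℚ)+1) := by
    rw [h]; ring
  rw [hneg, padicNorm.neg]
  apply padicNorm.sum_le ⟨0, by simp; omega⟩
  intro i hi
  have him : i < m := mem_range.1 hi
  rcases Nat.lt_or_ge i (m-1) with hc | hc
  · -- i ≤ m - 2, so m+1-i ≥ 3
    rw [term_eq m i him.le, padicNorm.mul, padicNorm.mul,
      nd_norm (m-i) (m+1-i) (by omega)]
    have h1 := two_bern_norm_le i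
    have h2 : padicNorm 2 ((m.choose i : ℚ)) ≤ 1 := padicNorm.of_nat _
    have h3 : (2:ℚ)^((padicValNat 2 (m+1-i) : ℤ) - (m-i : ℕ)) ≤ 1/2 := by
      have hv := val_le_sub_two (show 3 ≤ m+1-i by omega)
      have : (2:ℚ)^((padicValNat 2 (m+1-i) : ℤ) - (m-i : ℕ)) ≤ (2:ℚ)^(-1 : ℤ) := by
        apply zpow_le_zpow_right₀ one_le_two
        omega
      simpa using this
    calc padicNorm 2 (2*bernoulli i) * padicNorm 2 ((m.choose i : ℚ)) *
          (2:ℚ)^((padicValNat 2 (m+1-i) : ℤ) - (m-i : ℕ))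
        ≤ 1 * 1 * (1/2) := by
          apply mul_le_mul _ h3 (by positivity) (by norm_num)
          apply mul_le_mul h1 h2 (padicNorm.nonneg _) (by norm_num)
      _ = 1/2 := by norm_num
  · -- i = m - 1
    have hi1 : i = m - 1 := by omega
    rcases Nat.lt_or_ge m 3 with hm2 | hm3
    · -- m = 2, i = 1
      have hm' : m = 2 := by omega
      have hii : i = 1 := by omega
      subst hm'; subst hii
      have e : bernoulli 1 * (((2+1).choose 1 : ℕ) : ℚ) * 2 ^ (2+1-1) / (((2:ℕ):ℚ) + 1) = -2 := by
        rw [bernoulli_one]; norm_num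
      rw [e, padicNorm.neg, show (2:ℚ) = ((2:ℕ):ℚ) by norm_num,
        padicNorm.eq_zpow_of_nonzero (by norm_num), padicValRat.of_nat,
        padicValNat.self (by norm_num)]
      norm_num
    · -- m ≥ 4, bernoulli (m-1) = 0
      have hodd : Odd (m-1) := by
        rcases he with ⟨t, ht⟩
        exact ⟨t-1, by omega⟩
      have hz : bernoulli i = 0 := by
        rw [hi1]; exact bernoulli_odd_zero' hodd (by omega)
      rw [hz]
      simp

lemma bern_val {m : ℕ} (hm : 2 ≤ m) (he : Even m) :
    bernoulli m ≠ 0 ∧ padicValRat 2 (bernoulli m) = -1 := by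
  have hlt := two_bern_norm_lt m hm he
  have h1 : padicNorm 2 (2 * bernoulli m) = 1 := by
    have e : 2*bernoulli m = 1 + (2*bernoulli m - 1) := by ring
    rw [e, padicNorm.add_eq_max_of_ne, padicNorm.one]
    · exact max_eq_left (by linarith)
    · rw [padicNorm.one]
      intro hc
      rw [← hc] at hlt
      linarith
  have hne : bernoulli m ≠ 0 := by
    intro h
    rw [h, mul_zero, padicNorm.zero] at h1
    norm_num at h1
  refine ⟨hne, ?_⟩
  have h2 : padicNorm 2 (bernoulli m) = 2 := by
    have := padicNorm.mul (p := 2) 2 (bernoulli m)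
    rw [h1] at this
    have hn2 : padicNorm 2 (2:ℚ) = 1/2 := by
      rw [show (2:ℚ) = ((2:ℕ):ℚ) by norm_num,
        padicNorm.eq_zpow_of_nonzero (by norm_num), padicValRat.of_nat,
        padicValNat.self (by norm_num)]
      norm_num
    rw [hn2] at this
    linarith
  rw [padicNorm.eq_zpow_of_nonzero hne] at h2
  have h3 : ((2:ℕ):ℚ) ^ (-padicValRat 2 (bernoulli m)) = ((2:ℕ):ℚ) ^ (1:ℤ) := by
    rw [h2]; norm_num
  have h4 := zpow_right_injective₀ (show (0:ℚ) < ((2:ℕ):ℚ) by norm_num)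
    (show ((2:ℕ):ℚ) ≠ 1 by norm_num) h3
  omega


theorem stmt_17 (k ℓ : ℕ) (hk : 3 ≤ k) (hko : Odd k) (hℓ : 3 ≤ ℓ) (hℓo : Odd ℓ) :
    ¬ ∃ α : ℚ, α ^ 2 =
      ((k + 1).choose 2 : ℚ) * ((ℓ : ℚ) ^ 2 - 1) * bernoulli (k - 1) /
        ((ℓ : ℚ) ^ (k + 1) - 1) := by
  rintro ⟨α, hα⟩
  obtain ⟨hBne, hBval⟩ := bern_val (m := k-1) (by omega)
    (by rcases hko with ⟨t, ht⟩; exact ⟨t, by omega⟩)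
  -- notation
  set a := padicValNat 2 (ℓ+1) with ha
  set b := padicValNat 2 (ℓ-1) with hb
  set c := padicValNat 2 (k+1) with hc
  -- LTE
  have hx : ¬ 2 ∣ ℓ := by rcases hℓo with ⟨t, ht⟩; omega
  have hLTE := Nat.two_pow_sub_pow (x := ℓ) (y := 1) (by omega) hx
    (n := k+1) (by rcases hko with ⟨t, ht⟩; exact ⟨t+1, by omega⟩)
  have hℓpow : 1 < ℓ ^ (k+1) := by
    calc 1 < ℓ := by omega
    _ ≤ ℓ ^ (k+1) := Nat.le_self_pow (by omega) ℓ
  rw [one_pow] at hLTE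
  rw [← padicValNat_eq_emultiplicity (show ℓ^(k+1) - 1 ≠ 0 by omega),
    ← padicValNat_eq_emultiplicity (show ℓ+1 ≠ 0 by omega),
    ← padicValNat_eq_emultiplicity (show ℓ-1 ≠ 0 by omega),
    ← padicValNat_eq_emultiplicity (show k+1 ≠ 0 by omega)] at hLTE
  have hV : padicValNat 2 (ℓ^(k+1) - 1) + 1 = a + b + c := by exact_mod_cast hLTE
  set V := padicValNat 2 (ℓ^(k+1) - 1) with hVdef
  -- choose valuation
  have hch : 2 * ((k+1).choose 2) = (k+1) * k := by
    rw [Nat.choose_two_right, Nat.add_sub_cancel]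
    have : 2 ∣ (k+1) * k := by
      rcases hko with ⟨t, ht⟩; exact ⟨(t+1)*k, by rw [ht]; ring⟩
    omega
  have hchne : (k+1).choose 2 ≠ 0 := by
    have := Nat.choose_pos (show 2 ≤ k+1 by omega); omega
  have hvch : 1 + padicValNat 2 ((k+1).choose 2) = c := by
    have h1 : padicValNat 2 (2 * ((k+1).choose 2)) =
        padicValNat 2 2 + padicValNat 2 ((k+1).choose 2) :=
      padicValNat.mul (by norm_num) hchne
    have h2 : padicValNat 2 ((k+1) * k) = c + padicValNat 2 k :=
      padicValNat.mul (by omega) (by omega)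
    have h3 : padicValNat 2 k = 0 :=
      padicValNat.eq_zero_of_not_dvd (by rcases hko with ⟨t, ht⟩; omega)
    have h4 : padicValNat 2 2 = 1 := padicValNat.self (by norm_num)
    rw [hch] at h1
    omega
  -- cast factorizations
  have hsq : ((ℓ : ℚ) ^ 2 - 1) = ((ℓ+1 : ℕ):ℚ) * ((ℓ-1 : ℕ):ℚ) := by
    push_cast [Nat.cast_sub (show 1 ≤ ℓ by omega)]; ring
  have hpw : ((ℓ : ℚ) ^ (k+1) - 1) = ((ℓ^(k+1) - 1 : ℕ):ℚ) := by
    push_cast [Nat.cast_sub hℓpow.le]; ring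
  -- nonvanishing
  have hne1 : ((ℓ+1 : ℕ):ℚ) ≠ 0 := by positivity
  have hne2 : ((ℓ-1 : ℕ):ℚ) ≠ 0 := by
    have : (0:ℕ) < ℓ - 1 := by omega
    positivity
  have hne3 : ((ℓ^(k+1) - 1 : ℕ):ℚ) ≠ 0 := by
    have : (0:ℕ) < ℓ^(k+1) - 1 := by omega
    positivity
  have hneC : (((k+1).choose 2 : ℕ):ℚ) ≠ 0 := by positivity
  have hnum : (((k+1).choose 2 : ℕ):ℚ) * ((ℓ : ℚ) ^ 2 - 1) * bernoulli (k-1) ≠ 0 := by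
    rw [hsq]
    exact mul_ne_zero (mul_ne_zero hneC (mul_ne_zero hne1 hne2)) hBne
  have hRne : (((k+1).choose 2 : ℕ):ℚ) * ((ℓ : ℚ) ^ 2 - 1) * bernoulli (k-1) /
      ((ℓ : ℚ) ^ (k+1) - 1) ≠ 0 := by
    rw [hpw]
    exact div_ne_zero hnum hne3
  have hαne : α ≠ 0 := by
    intro h; rw [h] at hα; simp at hα; exact hRne hα.symm
  -- valuations
  have hval := congrArg (padicValRat 2) hα
  rw [padicValRat.pow α] at hval
  rw [padicValRat.div hnum (by rw [hpw]; exact hne3)] at hval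
  rw [padicValRat.mul (mul_ne_zero hneC (by rw [hsq]; exact mul_ne_zero hne1 hne2)) hBne] at hval
  rw [padicValRat.mul hneC (by rw [hsq]; exact mul_ne_zero hne1 hne2)] at hval
  rw [hsq, padicValRat.mul hne1 hne2, hpw] at hval
  rw [hBval, padicValRat.of_nat, padicValRat.of_nat, padicValRat.of_nat,
    padicValRat.of_nat] at hval
  -- hval : 2 * padicValRat 2 α = (vch + (a + b)) + (-1) - V
  omega
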